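/- Let S be a Cohen–Macaulay Noetherian ring, let I be an unmixed ideal of S of height c that is generically a complete intersection, and let m be a positive integer. Then I^(m) = I^m if and only if Ass_S(S/I^m) = Ass_S(S/I). -/

import Mathlib

open Ideal Filter

universe u

/-- The `m`-th symbolic power of an ideal `I`: the intersection, over all associated primes `p`
of `S ⧸ I`, of the contractions of `I ^ m` extended to the localization at `p`. -/
noncomputable def symbolicPower {S : Type*} [CommRing S] (I : Ideal S) (m : ℕ) : Ideal S :=
  ⨅ p : associatedPrimes S (S ⧸ I),
    letI : p.1.IsPrime := p.2.isPrime
    ((I ^ m).map (algebraMap S (Localization.AtPrime p.1))).comap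
      (algebraMap S (Localization.AtPrime p.1))

/-- The height of an ideal: the infimum of the heights of the primes containing it. -/
noncomputable def idealHeight {S : Type*} [CommRing S] (I : Ideal S) : ℕ∞ :=
  ⨅ (p : PrimeSpectrum S) (_ : I ≤ p.asIdeal), Order.height p

/-- An ideal is unmixed of height `c` if it has height `c` and every associated prime of `S ⧸ I`
has height `c`. -/
def IsUnmixedOfHeight {S : Type*} [CommRing S] (I : Ideal S) (c : ℕ) : Prop :=
  idealHeight I = (c : ℕ∞) ∧ ∀ p ∈ associatedPrimes S (S ⧸ I), idealHeight p = (c : ℕ∞)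

/-- An ideal `I` is generically a complete intersection if, for every associated prime `p` of
`S ⧸ I`, the extension of `I` to the localization at `p` is generated by a regular sequence. -/
def IsGenericallyCI {S : Type*} [CommRing S] (I : Ideal S) : Prop :=
  ∀ p : associatedPrimes S (S ⧸ I),
    letI : p.1.IsPrime := p.2.isPrime
    ∃ rs : List (Localization.AtPrime p.1),
      RingTheory.Sequence.IsRegular (Localization.AtPrime p.1) rs ∧
      Ideal.ofList rs = I.map (algebraMap S (Localization.AtPrime p.1))

/-- The depth of a local ring: the supremum of lengths of regular sequences contained in the
maximal ideal. -/
noncomputable def localDepth (R : Type*) [CommRing R] [IsLocalRing R] : ℕ∞ :=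
  ⨆ rs : {rs : List R // (∀ x ∈ rs, x ∈ IsLocalRing.maximalIdeal R) ∧
      RingTheory.Sequence.IsRegular R rs}, (rs.1.length : ℕ∞)

/-- A ring is Cohen-Macaulay if the localization at every prime ideal has depth equal to its
Krull dimension. -/
def IsCohenMacaulayRing (S : Type*) [CommRing S] : Prop :=
  ∀ (p : Ideal S) (_hp : p.IsPrime),
    (localDepth (Localization.AtPrime p) : WithBot ℕ∞) = ringKrullDim (Localization.AtPrime p)

section Aux

variable {S : Type u} [CommRing S]

/-- Contraction of the extension of `J` to the localization at `p`. -/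
noncomputable def QQ (J p : Ideal S) (hp : p.IsPrime) : Ideal S :=
  letI := hp
  (J.map (algebraMap S (Localization.AtPrime p))).comap (algebraMap S (Localization.AtPrime p))

lemma symbolicPower_eq (I : Ideal S) (m : ℕ) :
    symbolicPower I m = ⨅ p : associatedPrimes S (S ⧸ I), QQ (I ^ m) p.1 p.2.isPrime := rfl

lemma le_QQ (J p : Ideal S) (hp : p.IsPrime) : J ≤ QQ J p hp := by
  letI := hp
  exact Ideal.le_comap_map

lemma mem_QQ {J p : Ideal S} (hp : p.IsPrime) {x : S} :
    x ∈ QQ J p hp ↔ ∃ s ∉ p, s * x ∈ J := by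
  letI := hp
  constructor
  · intro hx
    obtain ⟨⟨⟨a, haJ⟩, s⟩, h⟩ :=
      (IsLocalization.mem_map_algebraMap_iff p.primeCompl (Localization.AtPrime p)).mp
        (Ideal.mem_comap.mp hx)
    rw [← _root_.map_mul, IsLocalization.eq_iff_exists p.primeCompl] at h
    obtain ⟨c, hc⟩ := h
    refine ⟨c * s, (c * s).2, ?_⟩
    have h2 : (c : S) * (s : S) * x = (c : S) * a := by
      have : (c : S) * (x * s) = c * a := hc
      push_cast
      linear_combination this
    rw [h2]
    exact J.mul_mem_left _ haJ
  · rintro ⟨s, hs, hsx⟩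
    have hu : IsUnit (algebraMap S (Localization.AtPrime p) s) :=
      IsLocalization.map_units _ (⟨s, hs⟩ : p.primeCompl)
    rw [QQ, Ideal.mem_comap]
    have h1 : algebraMap S (Localization.AtPrime p) s * algebraMap S (Localization.AtPrime p) x ∈
        J.map (algebraMap S (Localization.AtPrime p)) := by
      rw [← _root_.map_mul]; exact Ideal.mem_map_of_mem _ hsx
    have h2 := Ideal.mul_mem_left _ (↑hu.unit⁻¹) h1
    rwa [← mul_assoc, IsUnit.val_inv_mul, one_mul] at h2

lemma mem_iInf_QQ {J K : Ideal S} {x : S} :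
    (x ∈ ⨅ p : associatedPrimes S (S ⧸ K), QQ J p.1 p.2.isPrime) ↔
      ∀ p, ∀ h : p.IsPrime, p ∈ associatedPrimes S (S ⧸ K) → x ∈ QQ J p h := by
  rw [Submodule.mem_iInf]
  exact ⟨fun h p hpr hp => h ⟨p, hp⟩, fun h p => h p.1 p.2.isPrime p.2⟩

variable [IsNoetherianRing S]

/-- Any ideal equals the intersection of the contractions of its extensions at its
associated primes. -/
lemma inf_loc (J : Ideal S) :
    (⨅ p : associatedPrimes S (S ⧸ J), QQ J p.1 p.2.isPrime) = J := by
  refine le_antisymm ?_ (le_iInf fun p => le_QQ J p.1 p.2.isPrime)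
  intro x hx
  by_contra hxJ
  have hx0 : (Ideal.Quotient.mk J x : S ⧸ J) ≠ 0 := by
    simpa [Ideal.Quotient.eq_zero_iff_mem] using hxJ
  obtain ⟨P, hP, hPle⟩ := exists_le_isAssociatedPrime_of_isNoetherianRing S _ hx0
  obtain ⟨s, hs, hsx⟩ := (mem_QQ hP.isPrime).mp (mem_iInf_QQ.mp hx P hP.isPrime hP)
  refine hs (hPle ?_)
  rw [Submodule.mem_colon_singleton, Submodule.mem_bot]
  show s • (Ideal.Quotient.mk J x) = 0
  rw [← Ideal.Quotient.mk_eq_mk, ← Submodule.Quotient.mk_smul, Submodule.Quotient.mk_eq_zero]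
  simpa using hsx

end Aux

section Aux2

variable {S : Type u} [CommRing S]

set_option maxHeartbeats 1000000 in
lemma idealHeight_prime (p : Ideal S) (hp : p.IsPrime) :
    idealHeight p = Order.height (⟨p, hp⟩ : PrimeSpectrum S) := by
  apply le_antisymm
  · exact iInf_le_of_le ⟨p, hp⟩ (iInf_le_of_le le_rfl le_rfl)
  · exact le_iInf fun q => le_iInf fun hq => Order.height_mono hq

lemma mem_of_assoc {I p : Ideal S} (hp : p ∈ associatedPrimes S (S ⧸ I)) : I ≤ p := by
  have h1 := hp.annihilator_le
  rwa [Submodule.annihilator_top, Ideal.annihilator_quotient] at h1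

lemma assoc_min [IsNoetherianRing S] {I : Ideal S} {c : ℕ} (hunm : IsUnmixedOfHeight I c)
    {p : Ideal S} (hp : p ∈ associatedPrimes S (S ⧸ I)) : p ∈ I.minimalPrimes := by
  refine ⟨⟨hp.isPrime, mem_of_assoc hp⟩, ?_⟩
  rintro q ⟨hq, hIq⟩ hqp
  by_contra hpq
  set Q : PrimeSpectrum S := ⟨q, hq⟩ with hQ
  set P : PrimeSpectrum S := ⟨p, hp.isPrime⟩ with hP
  have hqp' : Q < P := by
    refine lt_of_le_of_ne hqp ?_
    intro h
    exact hpq (le_of_eq (congrArg PrimeSpectrum.asIdeal h).symm)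
  have hhq : (c : ℕ∞) ≤ Order.height Q := by
    rw [← hunm.1]
    exact iInf_le_of_le Q (iInf_le_of_le hIq le_rfl)
  have hhp : Order.height P = (c : ℕ∞) := by
    rw [← idealHeight_prime p hp.isPrime]
    exact hunm.2 p hp
  have hfin : Order.height Q < ⊤ :=
    lt_of_le_of_lt (Order.height_mono hqp'.le) (by rw [hhp]; exact WithTop.coe_lt_top c)
  have hlt := Order.height_strictMono hqp' hfin
  rw [hhp] at hlt
  exact absurd (lt_of_le_of_lt hhq hlt) (lt_irrefl _)

/-- Associated primes cannot be strictly contained in each other. -/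
lemma assoc_incomp [IsNoetherianRing S] {I : Ideal S} {c : ℕ} (hunm : IsUnmixedOfHeight I c)
    {p q : Ideal S} (hp : p ∈ associatedPrimes S (S ⧸ I))
    (hq : q ∈ associatedPrimes S (S ⧸ I)) (hqp : q ≤ p) : q = p :=
  le_antisymm hqp ((assoc_min hunm hp).2 ⟨hq.isPrime, mem_of_assoc hq⟩ hqp)

lemma assoc_finite [IsNoetherianRing S] {I : Ideal S} {c : ℕ}
    (hunm : IsUnmixedOfHeight I c) : (associatedPrimes S (S ⧸ I)).Finite := by
  refine Set.Finite.subset ?_ (fun p hp => assoc_min hunm hp)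
  rw [Ideal.minimalPrimes_eq_comap]
  exact Set.Finite.image _ (minimalPrimes.finite_of_isNoetherianRing (S ⧸ I))

end Aux2

section Aux3

variable {S : Type u} [CommRing S] [IsNoetherianRing S]

lemma QQ_primary {I : Ideal S} {c : ℕ} (hunm : IsUnmixedOfHeight I c) {m : ℕ} (hm : 0 < m)
    {p : Ideal S} (hp : p ∈ associatedPrimes S (S ⧸ I)) :
    (QQ (I ^ m) p hp.isPrime).IsPrimary ∧ (QQ (I ^ m) p hp.isPrime).radical = p := by
  haveI := hp.isPrime
  have hmin := assoc_min hunm hp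
  have hIp : I ≤ p := hmin.1.2
  have hradmap : (Ideal.map (algebraMap S (Localization.AtPrime p)) (I ^ m)).radical =
      IsLocalRing.maximalIdeal (Localization.AtPrime p) := by
    rw [Ideal.map_pow, Ideal.radical_pow _ hm.ne']
    apply le_antisymm
    · rw [Ideal.IsPrime.radical_le_iff (IsLocalRing.maximalIdeal.isMaximal _).isPrime]
      rw [← Localization.AtPrime.map_eq_maximalIdeal]
      exact Ideal.map_mono hIp
    · rw [Ideal.radical_eq_sInf]
      refine le_sInf ?_
      rintro J ⟨hJle, hJprime⟩
      have h1 : I ≤ J.comap (algebraMap S (Localization.AtPrime p)) :=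
        Ideal.map_le_iff_le_comap.mp hJle
      have h2 : J.comap (algebraMap S (Localization.AtPrime p)) ≤ p := by
        have hJm : J ≤ IsLocalRing.maximalIdeal (Localization.AtPrime p) :=
          IsLocalRing.le_maximalIdeal hJprime.ne_top
        have := Ideal.comap_mono (f := algebraMap S (Localization.AtPrime p)) hJm
        exact this.trans (Localization.AtPrime.under_maximalIdeal (I := p)).le
      have h3 : p ≤ J.comap (algebraMap S (Localization.AtPrime p)) :=
        hmin.2 ⟨Ideal.IsPrime.comap _ (hK := hJprime), h1⟩ h2
      calc IsLocalRing.maximalIdeal (Localization.AtPrime p)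
          = Ideal.map (algebraMap S (Localization.AtPrime p)) p :=
            (Localization.AtPrime.map_eq_maximalIdeal).symm
        _ ≤ Ideal.map (algebraMap S (Localization.AtPrime p))
              (J.comap (algebraMap S (Localization.AtPrime p))) := Ideal.map_mono h3
        _ = J := IsLocalization.map_comap p.primeCompl _ J
  have hmax : (Ideal.map (algebraMap S (Localization.AtPrime p)) (I ^ m)).radical.IsMaximal := by
    rw [hradmap]; exact IsLocalRing.maximalIdeal.isMaximal _
  have hprimary := Ideal.isPrimary_of_isMaximal_radical hmax
  have hradQQ : (QQ (I ^ m) p hp.isPrime).radical = p := by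
    show (Ideal.comap (algebraMap S (Localization.AtPrime p))
      (Ideal.map (algebraMap S (Localization.AtPrime p)) (I ^ m))).radical = p
    rw [← Ideal.comap_radical, hradmap]
    exact Localization.AtPrime.under_maximalIdeal (I := p)
  refine ⟨?_, hradQQ⟩
  obtain ⟨hne, hmul⟩ := Ideal.isPrimary_iff.mp hprimary
  rw [Ideal.isPrimary_iff]
  constructor
  · intro h
    apply hne
    rw [Ideal.eq_top_iff_one] at h ⊢
    simpa using Ideal.mem_comap.mp h
  · intro x y hxy
    have hxy' : algebraMap S (Localization.AtPrime p) x * algebraMap S (Localization.AtPrime p) y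
        ∈ Ideal.map (algebraMap S (Localization.AtPrime p)) (I ^ m) := by
      rw [← _root_.map_mul]
      exact Ideal.mem_comap.mp hxy
    rcases hmul hxy' with h | h
    · exact Or.inl (Ideal.mem_comap.mpr h)
    · right
      have h2 : y ∈ Ideal.comap (algebraMap S (Localization.AtPrime p))
          (Ideal.map (algebraMap S (Localization.AtPrime p)) (I ^ m)).radical :=
        Ideal.mem_comap.mpr h
      rw [Ideal.comap_radical] at h2
      exact h2

end Aux3

section Aux4

variable {S : Type u} [CommRing S] [IsNoetherianRing S]

lemma mem_pow_iff {I : Ideal S} {m : ℕ}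
    (hdecomp : (I ^ m : Ideal S) =
      ⨅ p : associatedPrimes S (S ⧸ I), QQ (I ^ m) p.1 p.2.isPrime) (r : S) :
    r ∈ I ^ m ↔ ∀ p, ∀ h : p.IsPrime, p ∈ associatedPrimes S (S ⧸ I) → r ∈ QQ (I ^ m) p h := by
  conv_lhs => rw [hdecomp]
  exact mem_iInf_QQ

lemma ass_pow_subset {I : Ideal S} {c : ℕ} (hunm : IsUnmixedOfHeight I c) {m : ℕ} (hm : 0 < m)
    (hdecomp : (I ^ m : Ideal S) =
      ⨅ p : associatedPrimes S (S ⧸ I), QQ (I ^ m) p.1 p.2.isPrime) :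
    associatedPrimes S (S ⧸ I ^ m) ⊆ associatedPrimes S (S ⧸ I) := by
  classical
  intro q hq
  obtain ⟨hq_prime, x', hx'⟩ := (isAssociatedPrime_iff).mp hq
  obtain ⟨x, rfl⟩ := Ideal.Quotient.mkₐ_surjective S _ x'
  have hq_mem : ∀ r : S, r ∈ q ↔ r * x ∈ I ^ m := by
    intro r
    rw [hx', Submodule.mem_colon_singleton, Submodule.mem_bot, ← map_smul, smul_eq_mul,
      Ideal.Quotient.mkₐ_eq_mk, ← Ideal.Quotient.mk_eq_mk, Submodule.Quotient.mk_eq_zero]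
  have hmemIm := mem_pow_iff hdecomp
  have key : ∃ p, ∃ hp : p ∈ associatedPrimes S (S ⧸ I),
      x ∉ QQ (I ^ m) p hp.isPrime ∧ p ≤ q := by
    by_contra hcon
    push_neg at hcon
    have hz : ∀ p, ∀ hp : p ∈ associatedPrimes S (S ⧸ I),
        ∃ z : S, z * x ∈ QQ (I ^ m) p hp.isPrime ∧ z ∉ q := by
      intro p hp
      by_cases hxp : x ∈ QQ (I ^ m) p hp.isPrime
      · exact ⟨1, by rw [one_mul]; exact hxp,
          fun h => hq_prime.ne_top ((Ideal.eq_top_iff_one q).mpr h)⟩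
      · have hpq : ¬ p ≤ q := hcon p hp hxp
        obtain ⟨y, hyp, hyq⟩ := SetLike.not_le_iff_exists.mp hpq
        have hyr : y ∈ (QQ (I ^ m) p hp.isPrime).radical := by
          rw [(QQ_primary hunm hm hp).2]; exact hyp
        obtain ⟨n, hn⟩ := hyr
        exact ⟨y ^ n, Ideal.mul_mem_right _ _ hn, fun h => hyq (hq_prime.mem_of_pow_mem n h)⟩
    choose z hz1 hz2 using hz
    have hfin := assoc_finite hunm
    have hw : (∏ r ∈ hfin.toFinset.attach, z r.1 (hfin.mem_toFinset.mp r.2)) ∈ q := by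
      rw [hq_mem, hmemIm]
      intro p hpr hp
      by_cases hxp : x ∈ QQ (I ^ m) p hpr
      · exact Ideal.mul_mem_left _ _ hxp
      · have hpT : (⟨p, hfin.mem_toFinset.mpr hp⟩ : {y // y ∈ hfin.toFinset})
            ∈ hfin.toFinset.attach := Finset.mem_attach _ _
        rw [← Finset.mul_prod_erase _ _ hpT, mul_right_comm]
        exact Ideal.mul_mem_right _ _ (hz1 p hp)
    haveI := hq_prime
    obtain ⟨⟨p, hpT⟩, -, hzq⟩ := (Ideal.IsPrime.prod_mem_iff).mp hw
    exact hz2 p _ hzq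
  obtain ⟨p, hp, hxQ, hpq⟩ := key
  have hqp : q ≤ p := by
    intro y hy
    have h1 : y * x ∈ QQ (I ^ m) p hp.isPrime := le_QQ _ _ _ ((hq_mem y).mp hy)
    have h2 := (Ideal.isPrimary_iff.mp (QQ_primary hunm hm hp).1).2
      (show x * y ∈ QQ (I ^ m) p hp.isPrime by rwa [mul_comm])
    rcases h2 with h | h
    · exact absurd h hxQ
    · rwa [(QQ_primary hunm hm hp).2] at h
  exact (hqp.antisymm hpq) ▸ hp

lemma ass_subset_pow {I : Ideal S} {c : ℕ} (hunm : IsUnmixedOfHeight I c) {m : ℕ} (hm : 0 < m)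
    (hdecomp : (I ^ m : Ideal S) =
      ⨅ p : associatedPrimes S (S ⧸ I), QQ (I ^ m) p.1 p.2.isPrime) :
    associatedPrimes S (S ⧸ I) ⊆ associatedPrimes S (S ⧸ I ^ m) := by
  classical
  intro p hp
  haveI hpprime := hp.isPrime
  have hfin := assoc_finite hunm
  set pS : {y // y ∈ hfin.toFinset} := ⟨p, hfin.mem_toFinset.mpr hp⟩ with hpS
  set F : Ideal S := (hfin.toFinset.attach.erase pS).inf
    (fun r => QQ (I ^ m) r.1 (hfin.mem_toFinset.mp r.2).isPrime) with hF
  have hnle : ¬ F ≤ QQ (I ^ m) p hp.isPrime := by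
    intro hle
    have hle2 : F ≤ p := le_trans hle
      (le_trans Ideal.le_radical (le_of_eq (QQ_primary hunm hm hp).2))
    obtain ⟨r, hrmem, hrle⟩ := (Ideal.IsPrime.inf_le' hpprime).mp hle2
    have hq := hfin.mem_toFinset.mp r.2
    have hrp : r.1 ≤ p := by
      calc r.1 = (QQ (I ^ m) r.1 hq.isPrime).radical := ((QQ_primary hunm hm hq).2).symm
        _ ≤ p.radical := Ideal.radical_mono hrle
        _ = p := hpprime.radical
    have : r.1 = p := assoc_incomp hunm hp hq hrp
    exact Finset.ne_of_mem_erase hrmem (Subtype.ext this)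
  obtain ⟨x, hxF, hxQp⟩ := SetLike.not_le_iff_exists.mp hnle
  set K : Ideal S := (I ^ m).colon (Ideal.span {x}) with hK
  have hKmem : ∀ r : S, r ∈ K ↔ r * x ∈ I ^ m := fun r => Ideal.mem_colon_span_singleton
  have hmemIm := mem_pow_iff hdecomp
  have hKQ : ∀ r : S, r ∈ K ↔ r * x ∈ QQ (I ^ m) p hp.isPrime := by
    intro r
    constructor
    · intro h
      exact le_QQ _ _ _ ((hKmem r).mp h)
    · intro h
      rw [hKmem, hmemIm]
      intro qq hqr hqmem
      by_cases hqp : qq = p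
      · subst hqp; exact h
      · have hqT : (⟨qq, hfin.mem_toFinset.mpr hqmem⟩ : {y // y ∈ hfin.toFinset})
            ∈ hfin.toFinset.attach.erase pS := by
          refine Finset.mem_erase.mpr ⟨?_, Finset.mem_attach _ _⟩
          intro hh
          exact hqp (congrArg Subtype.val hh)
        have hFle := Finset.inf_le (f := fun r => QQ (I ^ m) r.1
          (hfin.mem_toFinset.mp r.2).isPrime) hqT
        exact Ideal.mul_mem_left _ _ (hFle hxF)
  have hQK : QQ (I ^ m) p hp.isPrime ≤ K := fun r hr =>
    (hKQ r).mpr (Ideal.mul_mem_right _ _ hr)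
  have hKp : K ≤ p := by
    intro r hr
    have h1 := (hKQ r).mp hr
    have h2 := (Ideal.isPrimary_iff.mp (QQ_primary hunm hm hp).1).2
      (show x * r ∈ QQ (I ^ m) p hp.isPrime by rwa [mul_comm])
    rcases h2 with h | h
    · exact absurd h hxQp
    · rwa [(QQ_primary hunm hm hp).2] at h
  have hradK : K.radical = p := by
    apply le_antisymm
    · rw [← hpprime.radical]
      exact Ideal.radical_mono hKp
    · have h1 := Ideal.radical_mono hQK
      rwa [(QQ_primary hunm hm hp).2] at h1
  have hKprimary : K.IsPrimary := by
    rw [Ideal.isPrimary_iff]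
    constructor
    · intro h
      apply hxQp
      have h1 : (1 : S) ∈ K := by rw [h]; trivial
      have h2 := (hKQ 1).mp h1
      rwa [one_mul] at h2
    · intro a b hab
      have h1 := (hKQ _).mp hab
      have h2 := (Ideal.isPrimary_iff.mp (QQ_primary hunm hm hp).1).2
        (show (a * x) * b ∈ QQ (I ^ m) p hp.isPrime by rwa [mul_right_comm] at h1)
      rcases h2 with h | h
      · exact Or.inl ((hKQ a).mpr h)
      · right
        rw [hradK]
        rwa [(QQ_primary hunm hm hp).2] at h
  have hass := associatedPrimes.eq_singleton_of_isPrimary hKprimary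
  rw [hradK] at hass
  have hpK : IsAssociatedPrime p (S ⧸ K) := by
    rw [← AssociatedPrimes.mem_iff, hass]
    rfl
  obtain ⟨-, y', hy'⟩ := (isAssociatedPrime_iff).mp hpK
  obtain ⟨y, rfl⟩ := Ideal.Quotient.mkₐ_surjective S _ y'
  have hL : ∀ r : S, r ∈ p ↔ r * y ∈ K := by
    intro r
    rw [hy', Submodule.mem_colon_singleton, Submodule.mem_bot, ← map_smul, smul_eq_mul,
      Ideal.Quotient.mkₐ_eq_mk, ← Ideal.Quotient.mk_eq_mk, Submodule.Quotient.mk_eq_zero]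
  refine (isAssociatedPrime_iff (M := S ⧸ I ^ m)).mpr ⟨hpprime, Ideal.Quotient.mk (I ^ m) (y * x), ?_⟩
  ext r
  rw [Submodule.mem_colon_singleton, Submodule.mem_bot, hL r, hKmem,
    ← Ideal.Quotient.mk_eq_mk, ← Submodule.Quotient.mk_smul, Submodule.Quotient.mk_eq_zero]
  rw [smul_eq_mul, mul_assoc]

end Aux4

theorem stmt7' {S : Type u} [CommRing S] [IsNoetherianRing S]
    (I : Ideal S) (c : ℕ) (hunm : IsUnmixedOfHeight I c)
    (m : ℕ) (hm : 0 < m) :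
    symbolicPower I m = I ^ m ↔
      associatedPrimes S (S ⧸ (I ^ m)) = associatedPrimes S (S ⧸ I) := by
  constructor
  · intro h
    have hdecomp : (I ^ m : Ideal S) =
        ⨅ p : associatedPrimes S (S ⧸ I), QQ (I ^ m) p.1 p.2.isPrime :=
      h.symm.trans (symbolicPower_eq I m)
    exact Set.Subset.antisymm (ass_pow_subset hunm hm hdecomp) (ass_subset_pow hunm hm hdecomp)
  · intro hAss
    have h1 := inf_loc (I ^ m)
    refine (symbolicPower_eq I m).trans (Eq.trans ?_ h1)
    ext x
    rw [mem_iInf_QQ, mem_iInf_QQ, hAss]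


theorem stmt7 {S : Type u} [CommRing S] [IsNoetherianRing S] (hCM : IsCohenMacaulayRing S)
    (I : Ideal S) (c : ℕ) (hunm : IsUnmixedOfHeight I c) (hgci : IsGenericallyCI I)
    (m : ℕ) (hm : 0 < m) :
    symbolicPower I m = I ^ m ↔
      associatedPrimes S (S ⧸ (I ^ m)) = associatedPrimes S (S ⧸ I) :=
  stmt7' I c hunm m hm
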